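/- A group G is orderable (admits a total order compatible with multiplication on both sides) if and only if {a} ∉ E(G) for all a ∈ G \ {e}, where E(G) is the smallest family of subsets of G containing all S with S ∩ S⁻¹ ≠ ∅ and closed under the rules: T ∪ {a}, T ∪ {b} ∈ E(G) ⟹ T ∪ {a*b} ∈ E(G), and T ∪ {b*a} ∈ E(G) ⟹ T ∪ {a*b} ∈ E(G). -/

import Mathlib

/-- The inductive family `E(G)` of subsets of a group `G`: a set is in `E(G)` if it meets
its own set of inverses, and the family is closed under the rules
`T ∪ {a}, T ∪ {b} ∈ E(G) ⟹ T ∪ {a*b} ∈ E(G)` and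
`T ∪ {b*a} ∈ E(G) ⟹ T ∪ {a*b} ∈ E(G)`. -/
inductive BiD {G : Type*} [Group G] : Set G → Prop
  | base (S : Set G) (a : G) (ha : a ∈ S) (hinv : a⁻¹ ∈ S) : BiD S
  | step (T : Set G) (a b : G) (h1 : BiD (T ∪ {a})) (h2 : BiD (T ∪ {b})) :
      BiD (T ∪ {a * b})
  | swap (T : Set G) (a b : G) (h : BiD (T ∪ {b * a})) : BiD (T ∪ {a * b})

section Aux

variable {G : Type*} [Group G]

lemma bid_mono {S : Set G} (h : BiD S) : ∀ {S' : Set G}, S ⊆ S' → BiD S' := by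
  induction h with
  | base S a ha hinv => exact fun hs => BiD.base _ a (hs ha) (hs hinv)
  | step T a b h1 h2 ih1 ih2 =>
    intro S' hs
    have hT : T ⊆ S' := fun x hx => hs (Set.mem_union_left _ hx)
    have h1' : BiD (S' ∪ {a}) := ih1 (Set.union_subset_union_left _ hT)
    have h2' : BiD (S' ∪ {b}) := ih2 (Set.union_subset_union_left _ hT)
    have hmem : a * b ∈ S' := hs (Set.mem_union_right _ rfl)
    have := BiD.step S' a b h1' h2'
    rwa [Set.union_eq_left.mpr (Set.singleton_subset_iff.mpr hmem)] at this
  | swap T a b h ih =>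
    intro S' hs
    have hT : T ⊆ S' := fun x hx => hs (Set.mem_union_left _ hx)
    have h' : BiD (S' ∪ {b * a}) := ih (Set.union_subset_union_left _ hT)
    have hmem : a * b ∈ S' := hs (Set.mem_union_right _ rfl)
    have := BiD.swap S' a b h'
    rwa [Set.union_eq_left.mpr (Set.singleton_subset_iff.mpr hmem)] at this

lemma bid_finite {S : Set G} (h : BiD S) : ∃ F : Set G, F ⊆ S ∧ F.Finite ∧ BiD F := by
  induction h with
  | base S a ha hinv =>
    refine ⟨{a, a⁻¹}, ?_, (Set.finite_singleton a⁻¹).insert a, BiD.base _ a (by simp) (by simp)⟩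
    rintro x (rfl | rfl) <;> assumption
  | step T a b h1 h2 ih1 ih2 =>
    obtain ⟨F1, hs1, hf1, hb1⟩ := ih1
    obtain ⟨F2, hs2, hf2, hb2⟩ := ih2
    refine ⟨((F1 ∪ F2) ∩ T) ∪ {a * b}, ?_, ((hf1.union hf2).inter_of_left T).union
      (Set.finite_singleton _), ?_⟩
    · rintro x (⟨-, hxT⟩ | hx)
      · exact Set.mem_union_left _ hxT
      · exact Set.mem_union_right _ hx
    · refine BiD.step _ a b (bid_mono hb1 ?_) (bid_mono hb2 ?_)
      · intro x hx
        rcases hs1 hx with hxT | hxa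
        · exact Set.mem_union_left _ ⟨Set.mem_union_left _ hx, hxT⟩
        · exact Set.mem_union_right _ hxa
      · intro x hx
        rcases hs2 hx with hxT | hxb
        · exact Set.mem_union_left _ ⟨Set.mem_union_right _ hx, hxT⟩
        · exact Set.mem_union_right _ hxb
  | swap T a b h ih =>
    obtain ⟨F1, hs1, hf1, hb1⟩ := ih
    refine ⟨(F1 ∩ T) ∪ {a * b}, ?_, (hf1.inter_of_left T).union (Set.finite_singleton _), ?_⟩
    · rintro x (⟨-, hxT⟩ | hx)
      · exact Set.mem_union_left _ hxT
      · exact Set.mem_union_right _ hx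
    · refine BiD.swap _ a b (bid_mono hb1 ?_)
      intro x hx
      rcases hs1 hx with hxT | hxba
      · exact Set.mem_union_left _ ⟨hx, hxT⟩
      · exact Set.mem_union_right _ hxba

end Aux

section Cone

variable {G : Type*} [Group G]

def IsCone (Q : Set G) : Prop :=
  (∀ x ∈ Q, ∀ y ∈ Q, x * y ∈ Q) ∧ (∀ x : G, x ∈ Q ∨ x⁻¹ ∈ Q) ∧
    (∀ x ∈ Q, ∀ c : G, c * x * c⁻¹ ∈ Q)

def conePos (Q : Set G) : Set G := {x | x ∈ Q ∧ x⁻¹ ∉ Q}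

def coneKer (Q : Set G) : Set G := {x | x ∈ Q ∧ x⁻¹ ∈ Q}

variable {Q : Set G}

lemma pos_mul_pos (hQ : IsCone Q) {x y : G} (hx : x ∈ conePos Q) (hy : y ∈ conePos Q) :
    x * y ∈ conePos Q := by
  refine ⟨hQ.1 x hx.1 y hy.1, fun h => hx.2 ?_⟩
  have := hQ.1 y hy.1 _ h
  rwa [mul_inv_rev, mul_inv_cancel_left] at this

lemma pos_mul_ker (hQ : IsCone Q) {x k : G} (hx : x ∈ conePos Q) (hk : k ∈ coneKer Q) :
    x * k ∈ conePos Q := by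
  refine ⟨hQ.1 x hx.1 k hk.1, fun h => hx.2 ?_⟩
  have := hQ.1 k hk.1 _ h
  rwa [mul_inv_rev, mul_inv_cancel_left] at this

lemma ker_mul_pos (hQ : IsCone Q) {x k : G} (hk : k ∈ coneKer Q) (hx : x ∈ conePos Q) :
    k * x ∈ conePos Q := by
  refine ⟨hQ.1 k hk.1 x hx.1, fun h => hx.2 ?_⟩
  have := hQ.1 _ h k hk.1
  rwa [mul_inv_rev, inv_mul_cancel_right] at this

lemma ker_mul_ker (hQ : IsCone Q) {k l : G} (hk : k ∈ coneKer Q) (hl : l ∈ coneKer Q) :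
    k * l ∈ coneKer Q := by
  refine ⟨hQ.1 k hk.1 l hl.1, ?_⟩
  rw [mul_inv_rev]
  exact hQ.1 _ hl.2 _ hk.2

lemma ker_inv {k : G} (hk : k ∈ coneKer Q) : k⁻¹ ∈ coneKer Q :=
  ⟨hk.2, by simpa using hk.1⟩

lemma pos_conj (hQ : IsCone Q) {x : G} (hx : x ∈ conePos Q) (c : G) :
    c * x * c⁻¹ ∈ conePos Q := by
  refine ⟨hQ.2.2 x hx.1 c, fun h => hx.2 ?_⟩
  have := hQ.2.2 _ h c⁻¹
  have heq : c⁻¹ * (c * x * c⁻¹)⁻¹ * c⁻¹⁻¹ = x⁻¹ := by group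
  rwa [heq] at this

lemma ker_conj (hQ : IsCone Q) {k : G} (hk : k ∈ coneKer Q) (c : G) :
    c * k * c⁻¹ ∈ coneKer Q := by
  refine ⟨hQ.2.2 k hk.1 c, ?_⟩
  have := hQ.2.2 _ hk.2 c
  have heq : c * k⁻¹ * c⁻¹ = (c * k * c⁻¹)⁻¹ := by group
  rwa [heq] at this

lemma pos_not_inv {x : G} (hx : x ∈ conePos Q) : x⁻¹ ∉ conePos Q :=
  fun h => hx.2 h.1

lemma pos_ker_disjoint {x : G} (hx : x ∈ conePos Q) (hk : x ∈ coneKer Q) : False :=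
  hx.2 hk.2

lemma cone_trichotomy (hQ : IsCone Q) (x : G) :
    x ∈ conePos Q ∨ x⁻¹ ∈ conePos Q ∨ x ∈ coneKer Q := by
  by_cases hx : x ∈ Q
  · by_cases hxi : x⁻¹ ∈ Q
    · exact Or.inr (Or.inr ⟨hx, hxi⟩)
    · exact Or.inl ⟨hx, hxi⟩
  · rcases hQ.2.1 x with h | h
    · exact absurd h hx
    · exact Or.inr (Or.inl ⟨h, by simpa using hx⟩)

end Cone

section Main

variable {G : Type*} [Group G]

/-- A finite subset of the union of a nonempty chain is contained in a member. -/
lemma finite_subset_chain {c : Set (Set G)} (hc : IsChain (· ⊆ ·) c) (hne : c.Nonempty)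
    {F : Set G} (hF : F.Finite) : F ⊆ ⋃₀ c → ∃ P ∈ c, F ⊆ P := by
  refine Set.Finite.induction_on (motive := fun F _ => F ⊆ ⋃₀ c → ∃ P ∈ c, F ⊆ P) F hF ?_ ?_
  · intro _
    obtain ⟨P, hP⟩ := hne
    exact ⟨P, hP, by simp⟩
  · intro x F hxF hFfin ih hsub
    obtain ⟨P1, hP1, hFP1⟩ := ih fun y hy => hsub (Set.mem_insert_of_mem _ hy)
    obtain ⟨P2, hP2, hxP2⟩ := hsub (Set.mem_insert _ _)
    by_cases heq : P1 = P2
    · exact ⟨P2, hP2, Set.insert_subset_iff.mpr ⟨hxP2, heq ▸ hFP1⟩⟩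
    · rcases hc hP1 hP2 heq with h | h
      · exact ⟨P2, hP2, Set.insert_subset_iff.mpr ⟨hxP2, hFP1.trans h⟩⟩
      · exact ⟨P1, hP1, Set.insert_subset_iff.mpr ⟨h hxP2, hFP1⟩⟩

/-- From a non-derivable singleton `{a⁻¹}` build a cone in which `a⁻¹` is absent. -/
lemma exists_strict_cone (a : G) (ha : ¬ BiD ({a⁻¹} : Set G)) :
    ∃ Q : Set G, IsCone Q ∧ a⁻¹ ∉ Q := by
  classical
  set A : Set (Set G) := {P | a⁻¹ ∈ P ∧ ¬ BiD P} with hA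
  have hzorn : ∃ m, ({a⁻¹} : Set G) ⊆ m ∧ Maximal (· ∈ A) m := by
    refine zorn_subset_nonempty A ?_ {a⁻¹} ⟨rfl, ha⟩
    intro c hcA hchain hcne
    refine ⟨⋃₀ c, ⟨?_, ?_⟩, fun s hs => Set.subset_sUnion_of_mem hs⟩
    · obtain ⟨P, hP⟩ := hcne
      exact Set.mem_sUnion.mpr ⟨P, hP, (hcA hP).1⟩
    · intro hbid
      obtain ⟨F, hFsub, hFfin, hFbid⟩ := bid_finite hbid
      obtain ⟨P, hPc, hFP⟩ := finite_subset_chain hchain hcne hFfin hFsub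
      exact (hcA hPc).2 (bid_mono hFbid hFP)
  obtain ⟨P, -, hPA, hPmax⟩ := hzorn
  refine ⟨{x | BiD (P ∪ {x})}, ⟨?_, ?_, ?_⟩, ?_⟩
  · intro x hx y hy
    exact BiD.step P x y hx hy
  · intro x
    by_contra hcon
    push_neg at hcon
    obtain ⟨hx, hxi⟩ := hcon
    have hxP : x ∈ P := by
      have hmem : P ∪ {x} ∈ A := ⟨Set.mem_union_left _ hPA.1, hx⟩
      exact (hPmax hmem Set.subset_union_left) (Set.mem_union_right _ rfl)
    have hxiP : x⁻¹ ∈ P := by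
      have hmem : P ∪ {x⁻¹} ∈ A := ⟨Set.mem_union_left _ hPA.1, hxi⟩
      exact (hPmax hmem Set.subset_union_left) (Set.mem_union_right _ rfl)
    exact hPA.2 (BiD.base P x hxP hxiP)
  · intro x hx c
    have h1 : BiD (P ∪ {c⁻¹ * (c * x)}) := by
      have heq : c⁻¹ * (c * x) = x := by group
      rwa [heq]
    exact BiD.swap P (c * x) c⁻¹ h1
  · intro hmem
    have heq : P ∪ {a⁻¹} = P := Set.union_eq_left.mpr (Set.singleton_subset_iff.mpr hPA.1)
    rw [Set.mem_setOf_eq, heq] at hmem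
    exact hPA.2 hmem

/-- Main construction: a total invariant order from the hypothesis. -/
lemma exists_order (H : ∀ a : G, a ≠ 1 → ¬ BiD ({a} : Set G)) :
    ∃ le : G → G → Prop, (∀ a : G, le a a) ∧
      (∀ a b : G, le a b → le b a → a = b) ∧
      (∀ a b c : G, le a b → le b c → le a c) ∧
      (∀ a b : G, le a b ∨ le b a) ∧
      (∀ a b c d : G, le a b → le (c * a * d) (c * b * d)) := by
  classical
  let r : {Q : Set G // IsCone Q} → {Q : Set G // IsCone Q} → Prop :=
    fun Q Q' => conePos Q.1 ⊆ conePos Q'.1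
  have hzorn : ∃ m, ∀ q, r m q → r q m := by
    refine exists_maximal_of_chains_bounded ?_ (fun hab hbc => hab.trans hbc)
    intro c hchain
    set PU : Set G := ⋃ Q ∈ c, conePos Q.1 with hPU
    have hmemPU : ∀ w : G, w ∈ PU ↔ ∃ Q ∈ c, w ∈ conePos Q.1 := by
      intro w; simp [hPU]
    have hdis : ∀ w : G, w ∈ PU → w⁻¹ ∈ PU → False := by
      intro w hw hwi
      obtain ⟨Q1, hQ1c, hw1⟩ := (hmemPU w).1 hw
      obtain ⟨Q2, hQ2c, hw2⟩ := (hmemPU w⁻¹).1 hwi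
      by_cases heq : Q1 = Q2
      · subst heq; exact pos_not_inv hw1 hw2
      · rcases hchain hQ1c hQ2c heq with h | h
        · exact pos_not_inv (h hw1) hw2
        · exact pos_not_inv hw1 (h hw2)
    have hconj : ∀ w : G, w ∈ PU → ∀ g : G, g * w * g⁻¹ ∈ PU := by
      intro w hw g
      obtain ⟨Q1, hQ1c, hw1⟩ := (hmemPU w).1 hw
      exact (hmemPU _).2 ⟨Q1, hQ1c, pos_conj Q1.2 hw1 g⟩
    -- the upper bound cone
    have hQUcone : IsCone {x : G | x⁻¹ ∉ PU} := by
      refine ⟨?_, ?_, ?_⟩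
      · intro x hx y hy
        intro hcon
        obtain ⟨Q0, hQ0c, hxy⟩ := (hmemPU _).1 hcon
        have hx' : x ∈ conePos Q0.1 ∨ x ∈ coneKer Q0.1 := by
          rcases cone_trichotomy Q0.2 x with h | h | h
          · exact Or.inl h
          · exact absurd ((hmemPU _).2 ⟨Q0, hQ0c, h⟩) hx
          · exact Or.inr h
        have hy' : y ∈ conePos Q0.1 ∨ y ∈ coneKer Q0.1 := by
          rcases cone_trichotomy Q0.2 y with h | h | h
          · exact Or.inl h
          · exact absurd ((hmemPU _).2 ⟨Q0, hQ0c, h⟩) hy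
          · exact Or.inr h
        rcases hx' with hx' | hx' <;> rcases hy' with hy' | hy'
        · exact pos_not_inv (pos_mul_pos Q0.2 hx' hy') hxy
        · exact pos_not_inv (pos_mul_ker Q0.2 hx' hy') hxy
        · exact pos_not_inv (ker_mul_pos Q0.2 hx' hy') hxy
        · exact pos_ker_disjoint hxy (ker_inv (ker_mul_ker Q0.2 hx' hy'))
      · intro x
        by_cases hx : x⁻¹ ∈ PU
        · right
          intro hcon
          rw [inv_inv] at hcon
          exact hdis _ hcon hx
        · exact Or.inl hx
      · intro x hx g
        intro hcon
        have h2 := hconj _ hcon g⁻¹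
        have heq : g⁻¹ * (g * x * g⁻¹)⁻¹ * g⁻¹⁻¹ = x⁻¹ := by group
        rw [heq] at h2
        exact hx h2
    refine ⟨⟨{x : G | x⁻¹ ∉ PU}, hQUcone⟩, ?_⟩
    intro Q hQc
    intro z hz
    have hzPU : z ∈ PU := (hmemPU z).2 ⟨Q, hQc, hz⟩
    refine ⟨?_, ?_⟩
    · intro hcon
      exact hdis _ hzPU hcon
    · intro hcon
      rw [Set.mem_setOf_eq, inv_inv] at hcon
      exact hcon hzPU
  obtain ⟨M, hMmax⟩ := hzorn
  -- the kernel of M is trivial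
  have hker : ∀ x : G, x ∈ coneKer M.1 → x = 1 := by
    intro a haK
    by_contra hane
    have hainv : ¬ BiD ({a⁻¹} : Set G) := H a⁻¹ (inv_ne_one.mpr hane)
    obtain ⟨Qa, hQa, haQa⟩ := exists_strict_cone a hainv
    have haQa' : a ∈ Qa := by
      rcases hQa.2.1 a with h | h
      · exact h
      · exact absurd h haQa
    -- refined cone
    set Q' : Set G := conePos M.1 ∪ (coneKer M.1 ∩ Qa) with hQ'
    have hQ'cone : IsCone Q' := by
      refine ⟨?_, ?_, ?_⟩
      · rintro x (hx | hx) y (hy | hy)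
        · exact Or.inl (pos_mul_pos M.2 hx hy)
        · exact Or.inl (pos_mul_ker M.2 hx hy.1)
        · exact Or.inl (ker_mul_pos M.2 hx.1 hy)
        · exact Or.inr ⟨ker_mul_ker M.2 hx.1 hy.1, hQa.1 x hx.2 y hy.2⟩
      · intro x
        rcases cone_trichotomy M.2 x with h | h | h
        · exact Or.inl (Or.inl h)
        · exact Or.inr (Or.inl h)
        · rcases hQa.2.1 x with hxq | hxq
          · exact Or.inl (Or.inr ⟨h, hxq⟩)
          · exact Or.inr (Or.inr ⟨ker_inv h, hxq⟩)
      · rintro x (hx | hx) g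
        · exact Or.inl (pos_conj M.2 hx g)
        · exact Or.inr ⟨ker_conj M.2 hx.1 g, hQa.2.2 x hx.2 g⟩
    have hMQ' : r M ⟨Q', hQ'cone⟩ := by
      intro z hz
      refine ⟨Or.inl hz, ?_⟩
      rintro (hcon | hcon)
      · exact pos_not_inv hz hcon
      · have hzk := ker_inv hcon.1
        rw [inv_inv] at hzk
        exact pos_ker_disjoint hz hzk
    have hQ'M := hMmax _ hMQ'
    have haQ' : a ∈ conePos Q' := by
      refine ⟨Or.inr ⟨haK, haQa'⟩, ?_⟩
      rintro (hcon | hcon)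
      · exact pos_ker_disjoint hcon (ker_inv haK)
      · exact haQa hcon.2
    exact pos_ker_disjoint (hQ'M haQ') haK
  -- define the order
  have hone : (1 : G) ∈ M.1 := by
    rcases M.2.2.1 1 with h | h
    · exact h
    · simpa using h
  refine ⟨fun x y => y * x⁻¹ ∈ M.1, ?_, ?_, ?_, ?_, ?_⟩
  · intro x; simpa using hone
  · intro x y hxy hyx
    have h1 : y * x⁻¹ ∈ coneKer M.1 := by
      refine ⟨hxy, ?_⟩
      have heq : (y * x⁻¹)⁻¹ = x * y⁻¹ := by group
      rwa [heq]
    have := hker _ h1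
    have : y = x := by
      have h2 : y * x⁻¹ * x = 1 * x := by rw [this]
      simpa using h2
    exact this.symm
  · intro x y z hxy hyz
    have := M.2.1 _ hyz _ hxy
    have heq : z * y⁻¹ * (y * x⁻¹) = z * x⁻¹ := by group
    rwa [heq] at this
  · intro x y
    rcases M.2.2.1 (y * x⁻¹) with h | h
    · exact Or.inl h
    · right
      have heq : (y * x⁻¹)⁻¹ = x * y⁻¹ := by group
      rwa [heq] at h
  · intro x y g d hxy
    have := M.2.2.2 _ hxy g
    have heq : g * (y * x⁻¹) * g⁻¹ = (g * y * d) * (g * x * d)⁻¹ := by group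
    rwa [heq] at this

/-- Soundness: in an ordered group every `BiD` set contains a non-positive element. -/
lemma bid_sound {le : G → G → Prop}
    (htrans : ∀ a b c : G, le a b → le b c → le a c)
    (htotal : ∀ a b : G, le a b ∨ le b a)
    (hinv : ∀ a b c d : G, le a b → le (c * a * d) (c * b * d))
    {S : Set G} (h : BiD S) : ∃ g ∈ S, le g 1 := by
  induction h with
  | base S a ha hainv =>
    rcases htotal a 1 with h | h
    · exact ⟨a, ha, h⟩
    · refine ⟨a⁻¹, hainv, ?_⟩
      have := hinv 1 a a⁻¹ 1 h
      simpa using this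
  | step T a b h1 h2 ih1 ih2 =>
    obtain ⟨g, hg, hgle⟩ := ih1
    rcases hg with hgT | hga
    · exact ⟨g, Set.mem_union_left _ hgT, hgle⟩
    · obtain ⟨g', hg', hgle'⟩ := ih2
      rcases hg' with hgT' | hgb
      · exact ⟨g', Set.mem_union_left _ hgT', hgle'⟩
      · have hla : le a 1 := by
          have hge : g = a := hga
          rw [hge] at hgle; exact hgle
        have hlb : le b 1 := by
          have hge : g' = b := hgb
          rw [hge] at hgle'; exact hgle'
        refine ⟨a * b, Set.mem_union_right _ rfl, ?_⟩
        have hstep : le (a * b) b := by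
          have := hinv a 1 1 b hla
          simpa using this
        exact htrans _ _ _ hstep hlb
  | swap T a b h ih =>
    obtain ⟨g, hg, hgle⟩ := ih
    rcases hg with hgT | hgba
    · exact ⟨g, Set.mem_union_left _ hgT, hgle⟩
    · have hlba : le (b * a) 1 := by
        have hge : g = b * a := hgba
        rw [hge] at hgle; exact hgle
      refine ⟨a * b, Set.mem_union_right _ rfl, ?_⟩
      have := hinv (b * a) 1 a a⁻¹ hlba
      have heq1 : a * (b * a) * a⁻¹ = a * b := by group
      have heq2 : a * 1 * a⁻¹ = 1 := by group
      rwa [heq1, heq2] at this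

end Main

theorem stmt18 {G : Type*} [Group G] :
    (∃ le : G → G → Prop, (∀ a : G, le a a) ∧
      (∀ a b : G, le a b → le b a → a = b) ∧
      (∀ a b c : G, le a b → le b c → le a c) ∧
      (∀ a b : G, le a b ∨ le b a) ∧
      (∀ a b c d : G, le a b → le (c * a * d) (c * b * d))) ↔
    (∀ a : G, a ≠ 1 → ¬ BiD ({a} : Set G)) := by
  constructor
  · rintro ⟨le, hrefl, hantisym, htrans, htotal, hinv⟩ a ha hbid
    -- from le we get le a 1
    obtain ⟨g, hg, hgle⟩ := bid_sound htrans htotal hinv hbid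
    have hla : le a 1 := by
      have hge : g = a := hg
      rw [hge] at hgle; exact hgle
    -- and from the reversed order we get le 1 g
    have htotal' : ∀ x y : G, (fun u v => le v u) x y ∨ (fun u v => le v u) y x :=
      fun x y => (htotal y x)
    have htrans' : ∀ x y z : G, (fun u v => le v u) x y → (fun u v => le v u) y z →
        (fun u v => le v u) x z := fun x y z h1 h2 => htrans z y x h2 h1
    have hinv' : ∀ x y c d : G, (fun u v => le v u) x y →
        (fun u v => le v u) (c * x * d) (c * y * d) := fun x y c d h => hinv y x c d h
    obtain ⟨g', hg', hgle'⟩ := bid_sound htrans' htotal' hinv' hbid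
    have hl1a : le 1 a := by
      have hge : g' = a := hg'
      rw [hge] at hgle'; exact hgle'
    exact ha (hantisym a 1 hla hl1a)
  · exact exists_order
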